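/- The gradient-based contribution function ctrb^g satisfies the quantitative local faithfulness principle with respect to the QE semantics and with respect to the EB semantics: for every acyclic QBAG G and arguments a, x ∈ A, under QE (respectively EB) semantics the map ε ↦ σ_{G[x←ε]}(a) is differentiable at τ(x), so that σ_{G[x←τ(x)+ε]}(a) = σ_G(a) + ε·ctrb^g_{G,a}(x) + e(ε) with e(ε)/ε → 0 as ε → 0. -/

import Mathlib

open Finset

/-- A quantitative bipolar argumentation graph (QBAG): a finite set of arguments,
an initial strength function, and attack and support relations. -/
structure QBAG where
  args : Finset ℕ
  tau : ℕ → ℝ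
  att : Finset (ℕ × ℕ)
  supp : Finset (ℕ × ℕ)

namespace QBAG

/-- The edge relation of the underlying directed graph (attack or support). -/
def edge (G : QBAG) (x y : ℕ) : Prop := (x, y) ∈ G.att ∨ (x, y) ∈ G.supp

/-- Well-formedness: edges live on the arguments, attack and support are disjoint,
and initial strengths lie in [0,1]. -/
def WF (G : QBAG) : Prop :=
  (∀ p ∈ G.att, p.1 ∈ G.args ∧ p.2 ∈ G.args) ∧
  (∀ p ∈ G.supp, p.1 ∈ G.args ∧ p.2 ∈ G.args) ∧
  Disjoint G.att G.supp ∧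
  (∀ a ∈ G.args, G.tau a ∈ Set.Icc (0 : ℝ) 1)

/-- Acyclicity of the directed graph (A, Att ∪ Supp). -/
def Acyclic (G : QBAG) : Prop := ∀ x, ¬ Relation.TransGen G.edge x x

/-- Direct attackers of an argument. -/
def attackers (G : QBAG) (a : ℕ) : Finset ℕ :=
  (G.att.filter (fun p => p.2 = a)).image Prod.fst

/-- Direct supporters of an argument. -/
def supporters (G : QBAG) (a : ℕ) : Finset ℕ :=
  (G.supp.filter (fun p => p.2 = a)).image Prod.fst

/-- Restriction G↓S of a QBAG to a subset S of the arguments. -/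
def restrict (G : QBAG) (S : Finset ℕ) : QBAG where
  args := G.args ∩ S
  tau := G.tau
  att := G.att.filter (fun p => p.1 ∈ S ∧ p.2 ∈ S)
  supp := G.supp.filter (fun p => p.1 ∈ S ∧ p.2 ∈ S)

/-- G⁻: the QBAG G with every attack and support edge pointing into x removed. -/
def dropInto (G : QBAG) (x : ℕ) : QBAG where
  args := G.args
  tau := G.tau
  att := G.att.filter (fun p => p.2 ≠ x)
  supp := G.supp.filter (fun p => p.2 ≠ x)

/-- G[x←ε]: the QBAG G with the initial strength of x replaced by ε. -/
def setTau (G : QBAG) (x : ℕ) (ε : ℝ) : QBAG where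
  args := G.args
  tau := Function.update G.tau x ε
  att := G.att
  supp := G.supp

end QBAG

noncomputable section

/-- Sum aggregation. -/
def sumAgg (G : QBAG) (s : ℕ → ℝ) (a : ℕ) : ℝ :=
  (∑ y ∈ G.supporters a, s y) - (∑ y ∈ G.attackers a, s y)

/-- Product aggregation. -/
def prodAgg (G : QBAG) (s : ℕ → ℝ) (a : ℕ) : ℝ :=
  (∏ y ∈ G.attackers a, (1 - s y)) - (∏ y ∈ G.supporters a, (1 - s y))

/-- Top aggregation. -/
def topAgg (G : QBAG) (s : ℕ → ℝ) (a : ℕ) : ℝ :=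
  (G.supporters a).fold max 0 s - (G.attackers a).fold max 0 s

/-- h for the 2-Max(1) influence function. -/
def h2 (x : ℝ) : ℝ := max 0 x ^ 2 / (1 + max 0 x ^ 2)

/-- h for the 1-Max(1) influence function. -/
def h1 (x : ℝ) : ℝ := max 0 x / (1 + max 0 x)

/-- 2-Max(1) influence function (used by QE). -/
def iotaQE (w s : ℝ) : ℝ := w - w * h2 (-s) + (1 - w) * h2 s

/-- Linear(1) influence function (used by DFQuAD). -/
def iotaLin (w s : ℝ) : ℝ := w - w * max 0 (-s) + (1 - w) * max 0 s

/-- 1-Max(1) influence function (used by SD-DFQuAD). -/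
def iotaSD (w s : ℝ) : ℝ := w - w * h1 (-s) + (1 - w) * h1 s

/-- Euler-based influence function (used by EB and EBT). -/
def iotaEB (w s : ℝ) : ℝ := 1 - (1 - w ^ 2) / (1 + w * Real.exp s)

/-- σ is a modular semantics with aggregation `agg` and influence `iota`:
on every well-formed acyclic QBAG the final strengths satisfy the defining equations. -/
def IsSemantics (agg : QBAG → (ℕ → ℝ) → ℕ → ℝ) (iota : ℝ → ℝ → ℝ)
    (σ : QBAG → ℕ → ℝ) : Prop :=
  ∀ G : QBAG, G.WF → G.Acyclic → ∀ a ∈ G.args, σ G a = iota (G.tau a) (agg G (σ G) a)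

/-- QE semantics. -/
def IsQE (σ : QBAG → ℕ → ℝ) : Prop := IsSemantics sumAgg iotaQE σ

/-- DFQuAD semantics. -/
def IsDF (σ : QBAG → ℕ → ℝ) : Prop := IsSemantics prodAgg iotaLin σ

/-- SD-DFQuAD semantics. -/
def IsSD (σ : QBAG → ℕ → ℝ) : Prop := IsSemantics prodAgg iotaSD σ

/-- EB semantics. -/
def IsEB (σ : QBAG → ℕ → ℝ) : Prop := IsSemantics sumAgg iotaEB σ

/-- EBT semantics. -/
def IsEBT (σ : QBAG → ℕ → ℝ) : Prop := IsSemantics topAgg iotaEB σ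

/-- A gradual semantics assigns final strengths in [0,1] on acyclic QBAGs. -/
def IsGradualSemantics (σ : QBAG → ℕ → ℝ) : Prop :=
  ∀ G : QBAG, G.WF → G.Acyclic → ∀ a ∈ G.args, σ G a ∈ Set.Icc (0 : ℝ) 1

/-- Removal-based contribution: ctrb^r_{G,a}(x) = σ_G(a) − σ_{G↓(A∖{x})}(a). -/
def ctrbR (σ : QBAG → ℕ → ℝ) (G : QBAG) (a x : ℕ) : ℝ :=
  σ G a - σ (G.restrict (G.args.erase x)) a

/-- Intrinsic-removal contribution: ctrb^{ri}_{G,a}(x) = σ_{G⁻}(a) − σ_{G↓(A∖{x})}(a). -/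
def ctrbRI (σ : QBAG → ℕ → ℝ) (G : QBAG) (a x : ℕ) : ℝ :=
  σ (G.dropInto x) a - σ (G.restrict (G.args.erase x)) a

/-- Shapley-based contribution. -/
def ctrbS (σ : QBAG → ℕ → ℝ) (G : QBAG) (a x : ℕ) : ℝ :=
  ∑ X ∈ ((G.args.erase a).erase x).powerset,
    ((X.card.factorial : ℝ) * ((G.args.erase a).card - X.card - 1).factorial /
      (G.args.erase a).card.factorial) *
    (σ (G.restrict (G.args \ X)) a - σ (G.restrict (G.args \ insert x X)) a)

/-- Gradient-based contribution: the derivative at ε = τ(x) (within [0,1]) of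
the map ε ↦ σ_{G[x←ε]}(a). -/
def ctrbG (σ : QBAG → ℕ → ℝ) (G : QBAG) (a x : ℕ) : ℝ :=
  derivWithin (fun ε => σ (G.setTau x ε) a) (Set.Icc (0 : ℝ) 1) (G.tau x)

/-- The contribution existence principle. -/
def ContributionExistence (ctrb : QBAG → ℕ → ℕ → ℝ) (σ : QBAG → ℕ → ℝ) : Prop :=
  ∀ G : QBAG, G.WF → G.Acyclic → ∀ a ∈ G.args,
    σ G a ≠ G.tau a → ∃ x ∈ G.args, x ≠ a ∧ ctrb G a x ≠ 0

/-- The quantitative contribution existence principle. -/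
def QuantContributionExistence (ctrb : QBAG → ℕ → ℕ → ℝ) (σ : QBAG → ℕ → ℝ) : Prop :=
  ∀ G : QBAG, G.WF → G.Acyclic → ∀ a ∈ G.args,
    ∑ x ∈ G.args.erase a, ctrb G a x = σ G a - G.tau a

/-- The strong faithfulness principle. -/
def StrongFaithfulness (ctrb : QBAG → ℕ → ℕ → ℝ) (σ : QBAG → ℕ → ℝ) : Prop :=
  ∀ G : QBAG, G.WF → G.Acyclic → ∀ a ∈ G.args, ∀ x ∈ G.args,
    ∀ ε ∈ Set.Icc (0 : ℝ) 1,
      (ctrb G a x < 0 →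
        (ε < G.tau x → σ G a < σ (G.setTau x ε) a) ∧
        (ε > G.tau x → σ G a > σ (G.setTau x ε) a)) ∧
      (ctrb G a x = 0 → σ G a = σ (G.setTau x ε) a) ∧
      (ctrb G a x > 0 →
        (ε < G.tau x → σ G a > σ (G.setTau x ε) a) ∧
        (ε > G.tau x → σ G a < σ (G.setTau x ε) a))

/-- The local faithfulness principle. -/
def LocalFaithfulness (ctrb : QBAG → ℕ → ℕ → ℝ) (σ : QBAG → ℕ → ℝ) : Prop :=
  ∀ G : QBAG, G.WF → G.Acyclic → ∀ a ∈ G.args, ∀ x ∈ G.args,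
    ∃ δ > 0, ∀ ε ∈ Set.Icc (G.tau x - δ) (G.tau x + δ) ∩ Set.Icc (0 : ℝ) 1,
      (ctrb G a x < 0 →
        (ε < G.tau x → σ G a < σ (G.setTau x ε) a) ∧
        (ε > G.tau x → σ G a > σ (G.setTau x ε) a)) ∧
      (ctrb G a x > 0 →
        (ε < G.tau x → σ G a > σ (G.setTau x ε) a) ∧
        (ε > G.tau x → σ G a < σ (G.setTau x ε) a))

/-- The quantitative local faithfulness principle: the map ε ↦ σ_{G[x←ε]}(a) is
differentiable (within [0,1]) at τ(x) with derivative ctrb_{G,a}(x); equivalently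
σ_{G[x←τ(x)+ε]}(a) = σ_G(a) + ε·ctrb_{G,a}(x) + e(ε) with e(ε)/ε → 0. -/
def QuantLocalFaithfulness (ctrb : QBAG → ℕ → ℕ → ℝ) (σ : QBAG → ℕ → ℝ) : Prop :=
  ∀ G : QBAG, G.WF → G.Acyclic → ∀ a ∈ G.args, ∀ x ∈ G.args,
    HasDerivWithinAt (fun ε => σ (G.setTau x ε) a) (ctrb G a x)
      (Set.Icc (0 : ℝ) 1) (G.tau x)

/-- The counterfactuality principle. -/
def Counterfactuality (ctrb : QBAG → ℕ → ℕ → ℝ) (σ : QBAG → ℕ → ℝ) : Prop :=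
  ∀ G : QBAG, G.WF → G.Acyclic → ∀ a ∈ G.args, ∀ x ∈ G.args,
    (ctrb G a x < 0 → σ G a < σ (G.restrict (G.args.erase x)) a) ∧
    (ctrb G a x = 0 → σ G a = σ (G.restrict (G.args.erase x)) a) ∧
    (ctrb G a x > 0 → σ G a > σ (G.restrict (G.args.erase x)) a)

/-- The quantitative counterfactuality principle. -/
def QuantCounterfactuality (ctrb : QBAG → ℕ → ℕ → ℝ) (σ : QBAG → ℕ → ℝ) : Prop :=
  ∀ G : QBAG, G.WF → G.Acyclic → ∀ a ∈ G.args, ∀ x ∈ G.args,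
    ctrb G a x = σ G a - σ (G.restrict (G.args.erase x)) a

end

/-! ### Auxiliary material for the proof -/

noncomputable section AuxProof

open scoped Classical

/-- Depth measure: number of arguments with a path into `a`. -/
def depthM (G : QBAG) (a : ℕ) : ℕ :=
  (G.args.filter (fun z => Relation.TransGen G.edge z a)).card

/-- Fuel-indexed explicit computation of the semantics on `G[x←ε]`. -/
def Faux (G : QBAG) (iota : ℝ → ℝ → ℝ) (x : ℕ) : ℕ → ℕ → ℝ → ℝ
  | 0 => fun _ _ => 0
  | n+1 => fun a ε => iota (Function.update G.tau x ε a)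
      ((∑ y ∈ G.supporters a, Faux G iota x n y ε) -
       (∑ y ∈ G.attackers a, Faux G iota x n y ε))

lemma setTau_edge (G : QBAG) (x : ℕ) (ε : ℝ) : (G.setTau x ε).edge = G.edge := rfl

lemma setTau_acyclic (G : QBAG) (hAc : G.Acyclic) (x : ℕ) (ε : ℝ) :
    (G.setTau x ε).Acyclic := by
  intro z
  rw [setTau_edge]
  exact hAc z

lemma setTau_WF (G : QBAG) (hWF : G.WF) (x : ℕ) {ε : ℝ} (hε : ε ∈ Set.Icc (0:ℝ) 1) :
    (G.setTau x ε).WF := by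
  obtain ⟨h1, h2, h3, h4⟩ := hWF
  refine ⟨h1, h2, h3, ?_⟩
  intro a ha
  show Function.update G.tau x ε a ∈ Set.Icc (0:ℝ) 1
  rcases eq_or_ne a x with rfl | hax
  · simpa using hε
  · rw [Function.update_of_ne hax]
    exact h4 a ha

lemma mem_attackers {G : QBAG} {y a : ℕ} (h : y ∈ G.attackers a) : (y, a) ∈ G.att := by
  simp only [QBAG.attackers, Finset.mem_image, Finset.mem_filter] at h
  obtain ⟨p, ⟨hp, hp2⟩, hp1⟩ := h
  have : p = (y, a) := by
    cases p; simp_all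
  rwa [this] at hp

lemma mem_supporters {G : QBAG} {y a : ℕ} (h : y ∈ G.supporters a) : (y, a) ∈ G.supp := by
  simp only [QBAG.supporters, Finset.mem_image, Finset.mem_filter] at h
  obtain ⟨p, ⟨hp, hp2⟩, hp1⟩ := h
  have : p = (y, a) := by
    cases p; simp_all
  rwa [this] at hp

lemma depthM_lt (G : QBAG) (hAc : G.Acyclic) {y a : ℕ} (hy : y ∈ G.args)
    (h : G.edge y a) : depthM G y < depthM G a := by
  apply Finset.card_lt_card
  constructor
  · intro z hz
    simp only [Finset.mem_filter] at hz ⊢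
    exact ⟨hz.1, hz.2.tail h⟩
  · intro hsub
    have hyin : y ∈ G.args.filter (fun z => Relation.TransGen G.edge z a) := by
      simp only [Finset.mem_filter]
      exact ⟨hy, Relation.TransGen.single h⟩
    have := hsub hyin
    simp only [Finset.mem_filter] at this
    exact hAc y this.2

lemma sigma_eq_Faux (σ : QBAG → ℕ → ℝ) (iota : ℝ → ℝ → ℝ)
    (hσ : IsSemantics sumAgg iota σ) (G : QBAG) (hWF : G.WF) (hAc : G.Acyclic)
    (x : ℕ) :
    ∀ n : ℕ, ∀ a ∈ G.args, depthM G a < n → ∀ ε ∈ Set.Icc (0:ℝ) 1,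
      σ (G.setTau x ε) a = Faux G iota x n a ε := by
  intro n
  induction n with
  | zero => intro a _ h; omega
  | succ n ih =>
    intro a ha hd ε hε
    have hWF' := setTau_WF G hWF x hε
    have hAc' := setTau_acyclic G hAc x ε
    have heq := hσ _ hWF' hAc' a ha
    rw [heq]
    show iota (Function.update G.tau x ε a)
        ((∑ y ∈ G.supporters a, σ (G.setTau x ε) y) -
         (∑ y ∈ G.attackers a, σ (G.setTau x ε) y)) = _
    show _ = iota (Function.update G.tau x ε a)
        ((∑ y ∈ G.supporters a, Faux G iota x n y ε) -
         (∑ y ∈ G.attackers a, Faux G iota x n y ε))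
    congr 1
    have hda : depthM G a ≤ n := Nat.lt_succ_iff.mp hd
    have hsup : ∀ y ∈ G.supporters a, σ (G.setTau x ε) y = Faux G iota x n y ε := by
      intro y hy
      have hmem := mem_supporters hy
      have hyargs : y ∈ G.args := (hWF.2.1 _ hmem).1
      have hlt : depthM G y < depthM G a := depthM_lt G hAc hyargs (Or.inr hmem)
      exact ih y hyargs (lt_of_lt_of_le hlt hda) ε hε
    have hatt : ∀ y ∈ G.attackers a, σ (G.setTau x ε) y = Faux G iota x n y ε := by
      intro y hy
      have hmem := mem_attackers hy
      have hyargs : y ∈ G.args := (hWF.1 _ hmem).1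
      have hlt : depthM G y < depthM G a := depthM_lt G hAc hyargs (Or.inl hmem)
      exact ih y hyargs (lt_of_lt_of_le hlt hda) ε hε
    rw [Finset.sum_congr rfl hsup, Finset.sum_congr rfl hatt]

lemma Faux_diffAt (iota : ℝ → ℝ → ℝ)
    (hiota : ∀ (w s : ℝ → ℝ) (t : ℝ), DifferentiableAt ℝ w t →
      DifferentiableAt ℝ s t → w t ∈ Set.Icc (0:ℝ) 1 →
      DifferentiableAt ℝ (fun ε => iota (w ε) (s ε)) t)
    (G : QBAG) (hWF : G.WF) (x : ℕ) :
    ∀ n : ℕ, ∀ a ∈ G.args, DifferentiableAt ℝ (Faux G iota x n a) (G.tau x) := by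
  intro n
  induction n with
  | zero => intro a _; exact differentiableAt_const 0
  | succ n ih =>
    intro a ha
    show DifferentiableAt ℝ (fun ε => iota (Function.update G.tau x ε a)
      ((∑ y ∈ G.supporters a, Faux G iota x n y ε) -
       (∑ y ∈ G.attackers a, Faux G iota x n y ε))) (G.tau x)
    apply hiota
    · rcases eq_or_ne a x with rfl | hax
      · simp only [Function.update_self]
        exact differentiableAt_fun_id
      · simp only [Function.update_of_ne hax]
        exact differentiableAt_const _
    · apply DifferentiableAt.sub
      · apply DifferentiableAt.fun_sum
        intro y hy
        exact ih y ((hWF.2.1 _ (mem_supporters hy)).1)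
      · apply DifferentiableAt.fun_sum
        intro y hy
        exact ih y ((hWF.1 _ (mem_attackers hy)).1)
    · rw [Function.update_eq_self]
      exact hWF.2.2.2 a ha

lemma key_lemma (iota : ℝ → ℝ → ℝ)
    (hiota : ∀ (w s : ℝ → ℝ) (t : ℝ), DifferentiableAt ℝ w t →
      DifferentiableAt ℝ s t → w t ∈ Set.Icc (0:ℝ) 1 →
      DifferentiableAt ℝ (fun ε => iota (w ε) (s ε)) t)
    (σ : QBAG → ℕ → ℝ) (hσ : IsSemantics sumAgg iota σ) :
    QuantLocalFaithfulness (ctrbG σ) σ := by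
  intro G hWF hAc a ha x hx
  have hτx : G.tau x ∈ Set.Icc (0:ℝ) 1 := hWF.2.2.2 x hx
  have hF := Faux_diffAt iota hiota G hWF x (depthM G a + 1) a ha
  have heq := sigma_eq_Faux σ iota hσ G hWF hAc x (depthM G a + 1) a ha (Nat.lt_succ_self _)
  have hdiff : DifferentiableWithinAt ℝ (fun ε => σ (G.setTau x ε) a)
      (Set.Icc (0:ℝ) 1) (G.tau x) :=
    (hF.differentiableWithinAt).congr (fun y hy => heq y hy) (heq _ hτx)
  simpa [ctrbG] using hdiff.hasDerivWithinAt

lemma hasDerivAt_maxsq (x : ℝ) :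
    HasDerivAt (fun y : ℝ => max 0 y ^ 2) (2 * max 0 x) x := by
  rcases lt_trichotomy x 0 with hx | hx | hx
  · have h : (fun y : ℝ => max 0 y ^ 2) =ᶠ[nhds x] fun _ => (0:ℝ) := by
      filter_upwards [Iio_mem_nhds hx] with y hy
      simp [max_eq_left (Set.mem_Iio.mp hy).le]
    rw [max_eq_left hx.le, mul_zero]
    exact (hasDerivAt_const x (0:ℝ)).congr_of_eventuallyEq h
  · subst hx
    rw [hasDerivAt_iff_isLittleO]
    simp only [max_self, zero_pow, sub_zero, smul_zero, mul_zero, ne_eq,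
      OfNat.ofNat_ne_zero, not_false_eq_true]
    apply Asymptotics.isLittleO_iff.mpr
    intro c hc
    filter_upwards [Metric.ball_mem_nhds (0:ℝ) hc] with y hy
    rw [Metric.mem_ball, Real.dist_eq, sub_zero] at hy
    have h1 : max 0 y ≤ |y| := max_le (abs_nonneg y) (le_abs_self y)
    have h0 : (0:ℝ) ≤ max 0 y := le_max_left 0 y
    have : max 0 y ^ 2 ≤ |y| * |y| := by nlinarith
    rw [Real.norm_eq_abs, Real.norm_eq_abs, abs_of_nonneg (by positivity : (0:ℝ) ≤ max 0 y ^ 2)]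
    nlinarith [abs_nonneg y]
  · have h : (fun y : ℝ => max 0 y ^ 2) =ᶠ[nhds x] fun y => y ^ 2 := by
      filter_upwards [Ioi_mem_nhds hx] with y hy
      simp [max_eq_right (Set.mem_Ioi.mp hy).le]
    rw [max_eq_right hx.le]
    have := hasDerivAt_pow 2 x
    norm_num at this
    exact this.congr_of_eventuallyEq h

lemma differentiable_maxsq : Differentiable ℝ (fun y : ℝ => max 0 y ^ 2) :=
  fun x => (hasDerivAt_maxsq x).differentiableAt

lemma differentiable_h2 : Differentiable ℝ h2 := by
  have := differentiable_maxsq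
  apply Differentiable.div this ((differentiable_const (1:ℝ)).add this)
  intro x
  show (1:ℝ) + max 0 x ^ 2 ≠ 0
  positivity

lemma hiota_QE : ∀ (w s : ℝ → ℝ) (t : ℝ), DifferentiableAt ℝ w t →
    DifferentiableAt ℝ s t → w t ∈ Set.Icc (0:ℝ) 1 →
    DifferentiableAt ℝ (fun ε => iotaQE (w ε) (s ε)) t := by
  intro w s t hw hs _
  show DifferentiableAt ℝ (fun ε => w ε - w ε * h2 (-(s ε)) + (1 - w ε) * h2 (s ε)) t
  have hhs : DifferentiableAt ℝ (fun ε => h2 (s ε)) t :=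
    (differentiable_h2 (s t)).comp t hs
  have hhns : DifferentiableAt ℝ (fun ε => h2 (-(s ε))) t :=
    by have := (differentiable_h2 (-(s t))).comp t hs.neg; exact this
  exact ((hw.sub (hw.mul hhns)).add (((differentiableAt_const 1).sub hw).mul hhs))

lemma hiota_EB : ∀ (w s : ℝ → ℝ) (t : ℝ), DifferentiableAt ℝ w t →
    DifferentiableAt ℝ s t → w t ∈ Set.Icc (0:ℝ) 1 →
    DifferentiableAt ℝ (fun ε => iotaEB (w ε) (s ε)) t := by
  intro w s t hw hs hwt
  show DifferentiableAt ℝ (fun ε => 1 - (1 - w ε ^ 2) / (1 + w ε * Real.exp (s ε))) t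
  have hden : 1 + w t * Real.exp (s t) ≠ 0 := by
    have := Real.exp_pos (s t)
    have := hwt.1
    nlinarith
  exact (differentiableAt_const 1).sub
    (((differentiableAt_const 1).sub (hw.pow 2)).div
      ((differentiableAt_const 1).add (hw.mul hs.exp)) hden)

end AuxProof

/-- The gradient-based contribution function satisfies quantitative local
faithfulness w.r.t. the QE semantics and w.r.t. the EB semantics: the map
ε ↦ σ_{G[x←ε]}(a) is differentiable at τ(x) (within [0,1]) with derivative
ctrb^g_{G,a}(x), i.e. σ_{G[x←τ(x)+ε]}(a) = σ_G(a) + ε·ctrb^g_{G,a}(x) + e(ε) with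
e(ε)/ε → 0 as ε → 0. -/
theorem ctrbG_satisfies_quant_local_faithfulness_QE_EB
    (σ : QBAG → ℕ → ℝ) (hσ : IsQE σ ∨ IsEB σ) :
    QuantLocalFaithfulness (ctrbG σ) σ := by
  rcases hσ with h | h
  · exact key_lemma iotaQE hiota_QE σ h
  · exact key_lemma iotaEB hiota_EB σ h
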